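/- For n = 2ᵏ, the unnormalized Haar wavelet matrix Yₙ satisfies YₙᵗYₙ = block-diag(𝟙_{(n/2)×(n/2)}, 𝟙_{(n/2)×(n/2)}) + block-diag(Y_{n/2}ᵗY_{n/2}, Y_{n/2}ᵗY_{n/2}); consequently every eigenvalue of YₙᵗYₙ is a power of 2, with eigenvalue 2ʲ having multiplicity 2^{k−j} for 1 ≤ j ≤ k−1 and eigenvalue 2ᵏ having multiplicity 2. -/

import Mathlib

open Matrix Polynomial

/-- The column (domain) index type for domain size `2^k`. -/
def YCol : ℕ → Type := fun k => Nat.rec (Fin 1) (fun _ T => T ⊕ T) k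

/-- The index type of the difference (wavelet detail) rows over `2^k` leaves:
`2^k - 1` rows. -/
def DRow : ℕ → Type := fun k => Nat.rec Empty (fun _ T => Unit ⊕ (T ⊕ T)) k

instance yColFintype : ∀ k, Fintype (YCol k)
  | 0 => inferInstanceAs (Fintype (Fin 1))
  | (k + 1) => letI := yColFintype k; inferInstanceAs (Fintype (YCol k ⊕ YCol k))

instance yColDecEq : ∀ k, DecidableEq (YCol k)
  | 0 => inferInstanceAs (DecidableEq (Fin 1))
  | (k + 1) => letI := yColDecEq k; inferInstanceAs (DecidableEq (YCol k ⊕ YCol k))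

instance dRowFintype : ∀ k, Fintype (DRow k)
  | 0 => inferInstanceAs (Fintype Empty)
  | (k + 1) => letI := dRowFintype k; inferInstanceAs (Fintype (Unit ⊕ (DRow k ⊕ DRow k)))

/-- The difference rows of the Haar wavelet matrix: at each node of the binary tree,
a row with `+1` on the left subtree and `-1` on the right subtree. -/
noncomputable def Dmat : ∀ k, Matrix (DRow k) (YCol k) ℝ
  | 0 => Matrix.of fun e _ => e.elim
  | (k + 1) =>
      Matrix.fromRows
        (Matrix.of fun (_ : Unit) (c : YCol k ⊕ YCol k) =>
          Sum.elim (fun _ => (1 : ℝ)) (fun _ => (-1 : ℝ)) c)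
        (Matrix.fromBlocks (Dmat k) 0 0 (Dmat k))

/-- The (unnormalized) Haar wavelet matrix over `2^k` leaves: the all-ones row followed
by the difference rows. -/
noncomputable def Ymat (k : ℕ) : Matrix (Unit ⊕ DRow k) (YCol k) ℝ :=
  Matrix.fromRows (Matrix.of fun (_ : Unit) (_ : YCol k) => (1 : ℝ)) (Dmat k)

-- succ equation lemmas
lemma Dmat_succ (k : ℕ) : Dmat (k + 1) =
    Matrix.fromRows
      (Matrix.of fun (_ : Unit) (c : YCol k ⊕ YCol k) =>
        Sum.elim (fun _ => (1 : ℝ)) (fun _ => (-1 : ℝ)) c)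
      (Matrix.fromBlocks (Dmat k) 0 0 (Dmat k)) := rfl

lemma cardYCol : ∀ k, Fintype.card (YCol k) = 2 ^ k
  | 0 => rfl
  | (k + 1) => by
      have : Fintype.card (YCol (k+1)) = Fintype.card (YCol k) + Fintype.card (YCol k) :=
        Fintype.card_sum (α := YCol k) (β := YCol k)
      rw [this, cardYCol k]; ring

lemma Dmat_rowsum : ∀ k (r : DRow k), ∑ c, Dmat k r c = 0
  | 0 => fun r => r.elim
  | (k + 1) => by
      rintro (⟨⟩ | ((r : DRow k) | (r : DRow k)))
      · show ∑ c : YCol k ⊕ YCol k, (Matrix.of fun (_ : Unit) (c : YCol k ⊕ YCol k) =>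
            Sum.elim (fun _ => (1 : ℝ)) (fun _ => (-1 : ℝ)) c) () c = 0
        rw [Fintype.sum_sum_type]
        simp [Dmat_succ, Matrix.fromRows_apply_inl]
      · show ∑ c : YCol k ⊕ YCol k, Matrix.fromBlocks (Dmat k) 0 0 (Dmat k) (Sum.inl r) c = 0
        rw [Fintype.sum_sum_type]
        simpa using Dmat_rowsum k r
      · show ∑ c : YCol k ⊕ YCol k, Matrix.fromBlocks (Dmat k) 0 0 (Dmat k) (Sum.inr r) c = 0
        rw [Fintype.sum_sum_type]
        simpa using Dmat_rowsum k r

instance dRowDecEq : ∀ k, DecidableEq (DRow k)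
  | 0 => inferInstanceAs (DecidableEq Empty)
  | (k + 1) => letI := dRowDecEq k; inferInstanceAs (DecidableEq (Unit ⊕ (DRow k ⊕ DRow k)))

noncomputable def dwt : ∀ k, DRow k → ℝ
  | 0 => fun e => e.elim
  | (k + 1) => Sum.elim (fun _ => (2:ℝ) ^ (k+1)) (Sum.elim (dwt k) (dwt k))

lemma dwt_pos : ∀ k (r : DRow k), 0 < dwt k r
  | 0 => fun r => r.elim
  | (k + 1) => by
      rintro (⟨⟩ | (r | r))
      · exact pow_pos two_pos _
      · exact dwt_pos k r
      · exact dwt_pos k r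

lemma Dmat_gram : ∀ k, Dmat k * (Dmat k)ᵀ = Matrix.diagonal (dwt k)
  | 0 => by
      ext r _; exact r.elim
  | (k + 1) => by
      have ih := Dmat_gram k
      set s : Matrix Unit (YCol k ⊕ YCol k) ℝ :=
        Matrix.of fun (_ : Unit) (c : YCol k ⊕ YCol k) =>
          Sum.elim (fun _ => (1 : ℝ)) (fun _ => (-1 : ℝ)) c with hs
      set M : Matrix (DRow k ⊕ DRow k) (YCol k ⊕ YCol k) ℝ :=
        Matrix.fromBlocks (Dmat k) 0 0 (Dmat k) with hM
      have h11 : s * sᵀ = Matrix.diagonal (fun _ : Unit => (2:ℝ) ^ (k+1)) := by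
        ext ⟨⟩ ⟨⟩
        rw [Matrix.mul_apply, Fintype.sum_sum_type]
        simp [hs, Finset.card_univ]
        rw [cardYCol]; push_cast; ring
      have h12 : s * Mᵀ = 0 := by
        ext ⟨⟩ c
        rw [Matrix.mul_apply]
        rcases c with c | c <;>
        · rw [Fintype.sum_sum_type]
          simpa [hs, hM] using Dmat_rowsum k c
      have h21 : M * sᵀ = 0 := by
        ext r ⟨⟩
        rw [Matrix.mul_apply]
        rcases r with r | r <;>
        · rw [Fintype.sum_sum_type]
          simpa [hs, hM, mul_comm] using Dmat_rowsum k r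
      have h22 : M * Mᵀ = Matrix.diagonal (Sum.elim (dwt k) (dwt k)) := by
        rw [hM, Matrix.fromBlocks_transpose, Matrix.fromBlocks_multiply]
        simp [ih, Matrix.fromBlocks_diagonal]
      show Matrix.fromRows s M * (Matrix.fromRows s M)ᵀ = Matrix.diagonal
        (Sum.elim (fun _ : Unit => (2:ℝ) ^ (k+1)) (Sum.elim (dwt k) (dwt k)))
      rw [Matrix.transpose_fromRows, Matrix.fromRows_mul_fromCols,
        h11, h12, h21, h22, Matrix.fromBlocks_diagonal]

lemma Ymat_gram (k : ℕ) :
    Ymat k * (Ymat k)ᵀ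
      = Matrix.diagonal (Sum.elim (fun _ : Unit => (2:ℝ) ^ k) (dwt k)) := by
  set o : Matrix Unit (YCol k) ℝ := Matrix.of fun _ _ => (1:ℝ) with ho
  have h11 : o * oᵀ = Matrix.diagonal (fun _ : Unit => (2:ℝ) ^ k) := by
    ext ⟨⟩ ⟨⟩
    rw [Matrix.mul_apply]
    simp [ho, Finset.card_univ]
    rw [cardYCol]; push_cast; ring
  have h12 : o * (Dmat k)ᵀ = 0 := by
    ext ⟨⟩ c
    rw [Matrix.mul_apply]
    simpa [ho] using Dmat_rowsum k c
  have h21 : Dmat k * oᵀ = 0 := by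
    ext r ⟨⟩
    rw [Matrix.mul_apply]
    simpa [ho, mul_comm] using Dmat_rowsum k r
  rw [Ymat, Matrix.transpose_fromRows, Matrix.fromRows_mul_fromCols, ← ho,
    h11, h12, h21, Dmat_gram k, Matrix.fromBlocks_diagonal]

lemma cardDRow : ∀ k, Fintype.card (DRow k) + 1 = 2 ^ k
  | 0 => by simp [show Fintype.card (DRow 0) = 0 from rfl]
  | (k + 1) => by
      have h : Fintype.card (DRow (k+1))
          = 1 + (Fintype.card (DRow k) + Fintype.card (DRow k)) := by
        rw [show Fintype.card (DRow (k+1))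
            = Fintype.card (Unit ⊕ (DRow k ⊕ DRow k)) from rfl]
        simp [Fintype.card_sum]
      have ih := cardDRow k
      rw [h]; rw [pow_succ]; omega

lemma my_charpoly_mul_comm {n : Type*} [Fintype n] [DecidableEq n]
    (A B : Matrix n n ℝ) (hA : A.det ≠ 0) :
    (A * B).charpoly = (B * A).charpoly := by
  have key : charmatrix (A * B) * A.map C = A.map C * charmatrix (B * A) := by
    simp only [charmatrix, RingHom.mapMatrix_apply, sub_mul, mul_sub, Matrix.map_mul]
    congr 1
    · exact (Matrix.scalar_commute X (fun r => Commute.all X r) (A.map C)).eq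
    · rw [Matrix.mul_assoc]
  have hdet : (A.map C).det ≠ 0 := by
    rw [show A.map (C : ℝ → ℝ[X]) = (C : ℝ →+* ℝ[X]).mapMatrix A from rfl,
      ← RingHom.map_det]
    simpa using hA
  have := congrArg Matrix.det key
  rw [Matrix.det_mul, Matrix.det_mul] at this
  have h2 : (A * B).charmatrix.det = (B * A).charmatrix.det := by
    rw [mul_comm] at this
    exact mul_left_cancel₀ hdet this
  rw [Matrix.charpoly, Matrix.charpoly, h2]

lemma my_charpoly_diagonal {n : Type*} [Fintype n] [DecidableEq n] (d : n → ℝ) :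
    (Matrix.diagonal d).charpoly = ∏ i, (X - C (d i)) := by
  have h : charmatrix (Matrix.diagonal d)
      = Matrix.diagonal (fun i => (X : ℝ[X]) - C (d i)) := by
    ext i j
    rcases eq_or_ne i j with rfl | hij
    · simp
    · simp [Matrix.charmatrix_apply_ne _ _ _ hij, Matrix.diagonal_apply_ne _ hij]
  rw [Matrix.charpoly, h, Matrix.det_diagonal]

lemma Ymat_charpoly (k : ℕ) :
    ((Ymat k)ᵀ * Ymat k).charpoly
      = ∏ r : Unit ⊕ DRow k,
          ((X : ℝ[X]) - C (Sum.elim (fun _ : Unit => (2:ℝ) ^ k) (dwt k) r)) := by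
  obtain ⟨e⟩ : Nonempty (YCol k ≃ (Unit ⊕ DRow k)) := by
    rw [← Fintype.card_eq, cardYCol, Fintype.card_sum]
    have := cardDRow k
    simp only [Fintype.card_unit]
    omega
  set Y' : Matrix (YCol k) (YCol k) ℝ := (Ymat k).submatrix e id with hY'
  have h1 : Y'ᵀ * Y' = (Ymat k)ᵀ * Ymat k := by
    rw [hY', Matrix.transpose_submatrix, Matrix.submatrix_mul_equiv,
      Matrix.submatrix_id_id]
  have h2 : Y' * Y'ᵀ
      = Matrix.diagonal ((Sum.elim (fun _ : Unit => (2:ℝ) ^ k) (dwt k)) ∘ e) := by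
    rw [hY', Matrix.transpose_submatrix]
    have := Matrix.submatrix_mul_equiv (Ymat k) (Ymat k)ᵀ e (Equiv.refl (YCol k)) e
    simp only [Equiv.coe_refl] at this
    rw [this, Ymat_gram, Matrix.submatrix_diagonal_equiv]
  have hpos : ∀ r : Unit ⊕ DRow k,
      0 < Sum.elim (fun _ : Unit => (2:ℝ) ^ k) (dwt k) r := by
    rintro (⟨⟩ | r)
    · exact pow_pos two_pos _
    · exact dwt_pos k r
  have hdet : Y'.det ≠ 0 := by
    intro h0
    have : Y'.det * Y'ᵀ.det = (Y' * Y'ᵀ).det := (Matrix.det_mul _ _).symm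
    rw [h2, Matrix.det_diagonal] at this
    have hprod : (0:ℝ) < ∏ i, (Sum.elim (fun _ : Unit => (2:ℝ) ^ k) (dwt k)) (e i) :=
      Finset.prod_pos fun i _ => hpos _
    rw [h0, zero_mul] at this
    exact absurd this.symm (ne_of_gt hprod)
  have hdetT : Y'ᵀ.det ≠ 0 := by rwa [Matrix.det_transpose]
  calc ((Ymat k)ᵀ * Ymat k).charpoly = (Y'ᵀ * Y').charpoly := by rw [h1]
    _ = (Y' * Y'ᵀ).charpoly := my_charpoly_mul_comm _ _ hdetT
    _ = ∏ i : YCol k,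
          ((X : ℝ[X]) - C (Sum.elim (fun _ : Unit => (2:ℝ) ^ k) (dwt k) (e i))) := by
        rw [h2, my_charpoly_diagonal]; rfl
    _ = _ := Equiv.prod_comp e
          (fun r => (X : ℝ[X]) - C (Sum.elim (fun _ : Unit => (2:ℝ) ^ k) (dwt k) r))

lemma prodD_succ (k : ℕ) :
    ∏ r : DRow (k+1), ((X : ℝ[X]) - C (dwt (k+1) r))
      = ((X : ℝ[X]) - C ((2:ℝ) ^ (k+1)))
          * (∏ r : DRow k, ((X : ℝ[X]) - C (dwt k r))) ^ 2 := by
  rw [show (∏ r : DRow (k+1), ((X : ℝ[X]) - C (dwt (k+1) r)))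
      = ∏ r : Unit ⊕ (DRow k ⊕ DRow k),
          ((X : ℝ[X]) - C (Sum.elim (fun _ => (2:ℝ) ^ (k+1))
            (Sum.elim (dwt k) (dwt k)) r)) from rfl]
  rw [Fintype.prod_sum_type, Fintype.prod_sum_type]
  simp [sq]

lemma prodD_formula : ∀ k, 1 ≤ k →
    ∏ r : DRow k, ((X : ℝ[X]) - C (dwt k r))
      = ((X : ℝ[X]) - C ((2:ℝ) ^ k))
          * ∏ j ∈ Finset.Ico 1 k, ((X : ℝ[X]) - C ((2:ℝ) ^ j)) ^ (2 ^ (k - j)) := by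
  intro k hk
  induction k, hk using Nat.le_induction with
  | base =>
      rw [show (∏ r : DRow 1, ((X : ℝ[X]) - C (dwt 1 r)))
          = ∏ r : Unit ⊕ (Empty ⊕ Empty),
              ((X : ℝ[X]) - C (Sum.elim (fun _ => (2:ℝ) ^ 1)
                (Sum.elim (dwt 0) (dwt 0)) r)) from rfl]
      rw [Fintype.prod_sum_type, Fintype.prod_sum_type]
      simp
      rfl
  | succ k hk ih =>
      rw [prodD_succ, ih]
      rw [Finset.prod_Ico_succ_top hk]
      have h1 : (2 : ℕ) ^ (k + 1 - k) = 2 := by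
        have hkk : k + 1 - k = 1 := by omega
        rw [hkk, pow_one]
      have h2 : ∏ j ∈ Finset.Ico 1 k,
          ((X : ℝ[X]) - C ((2:ℝ) ^ j)) ^ (2 ^ (k + 1 - j))
          = (∏ j ∈ Finset.Ico 1 k,
              ((X : ℝ[X]) - C ((2:ℝ) ^ j)) ^ (2 ^ (k - j))) ^ 2 := by
        rw [← Finset.prod_pow]
        refine Finset.prod_congr rfl fun j hj => ?_
        rw [← pow_mul]
        congr 1
        have : j < k := (Finset.mem_Ico.mp hj).2
        rw [← pow_succ]
        congr 1
        omega
      rw [h1, h2]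
      ring

/-- For `n = 2^(k+1)`, `YₙᵗYₙ` is the block diagonal of two all-ones `(n/2)×(n/2)`
matrices plus the block diagonal of two copies of `Y_{n/2}ᵗY_{n/2}`; consequently, the
characteristic polynomial of `YₙᵗYₙ` (`n = 2^k`, `k ≥ 1`) is
`(X - 2^k)² ∏_{j=1}^{k-1} (X - 2^j)^(2^(k-j))`: every eigenvalue is a power of two, with
eigenvalue `2^j` of multiplicity `2^(k-j)` for `1 ≤ j ≤ k-1` and `2^k` of multiplicity 2. -/
theorem wavelet_gram_and_charpoly (k : ℕ) :
    ((Ymat (k + 1))ᵀ * Ymat (k + 1)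
        = Matrix.fromBlocks (Matrix.of fun (_ _ : YCol k) => (1 : ℝ)) 0 0
            (Matrix.of fun (_ _ : YCol k) => (1 : ℝ))
          + Matrix.fromBlocks ((Ymat k)ᵀ * Ymat k) 0 0 ((Ymat k)ᵀ * Ymat k)) ∧
    (1 ≤ k →
      ((Ymat k)ᵀ * Ymat k).charpoly
        = (X - C ((2 : ℝ) ^ k)) ^ 2 *
            ∏ j ∈ Finset.Ico 1 k, (X - C ((2 : ℝ) ^ j)) ^ (2 ^ (k - j))) := by
  constructor
  · have hY : ∀ m, (Ymat m)ᵀ * Ymat m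
        = (Matrix.of fun (_ _ : YCol m) => (1:ℝ)) + (Dmat m)ᵀ * Dmat m := by
      intro m
      rw [Ymat, Matrix.transpose_fromRows, Matrix.fromCols_mul_fromRows]
      congr 1
      ext i j
      rw [Matrix.mul_apply]
      simp
    have hD : (Dmat (k+1))ᵀ * Dmat (k+1)
        = (Matrix.of fun (_ : Unit) (c : YCol k ⊕ YCol k) =>
            Sum.elim (fun _ => (1 : ℝ)) (fun _ => (-1 : ℝ)) c)ᵀ
          * (Matrix.of fun (_ : Unit) (c : YCol k ⊕ YCol k) =>
            Sum.elim (fun _ => (1 : ℝ)) (fun _ => (-1 : ℝ)) c)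
          + Matrix.fromBlocks ((Dmat k)ᵀ * Dmat k) 0 0 ((Dmat k)ᵀ * Dmat k) := by
      show (Matrix.fromRows (Matrix.of fun (_ : Unit) (c : YCol k ⊕ YCol k) =>
          Sum.elim (fun _ => (1 : ℝ)) (fun _ => (-1 : ℝ)) c)
          (Matrix.fromBlocks (Dmat k) 0 0 (Dmat k)))ᵀ * Matrix.fromRows (Matrix.of fun (_ : Unit) (c : YCol k ⊕ YCol k) =>
          Sum.elim (fun _ => (1 : ℝ)) (fun _ => (-1 : ℝ)) c)
          (Matrix.fromBlocks (Dmat k) 0 0 (Dmat k)) = _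
      rw [Matrix.transpose_fromRows, Matrix.fromCols_mul_fromRows,
        Matrix.fromBlocks_transpose, Matrix.fromBlocks_multiply]
      simp
    rw [hY (k+1)]
    refine (congrArg (fun M : Matrix (YCol k ⊕ YCol k) (YCol k ⊕ YCol k) ℝ =>
      (Matrix.of fun (_ _ : YCol k ⊕ YCol k) => (1:ℝ)) + M) hD).trans ?_
    rw [hY k]
    ext (i | i) (j | j) <;>
      simp [Matrix.mul_apply, Matrix.add_apply]
  · intro hk
    rw [Ymat_charpoly k, Fintype.prod_sum_type]
    simp only [Sum.elim_inl, Sum.elim_inr]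
    rw [Finset.prod_const, Finset.card_univ, Fintype.card_unit, pow_one]
    rw [prodD_formula k hk]
    ring
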